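/- Let f : ℝ → ℝ be continuous with f(s) = 0 for every s ≤ 0, and suppose that the map s ↦ f(s)/s³ is positive and nondecreasing on (0,∞). Then the function G(s) := s f(s) − 4 F(s) is nondecreasing on [0,∞); in particular G(s) ≥ G(0) = 0 for every s > 0. -/

import Mathlib

theorem stmt_1 (f : ℝ → ℝ)
    (hf_cont : Continuous f)
    (hf_zero : ∀ s : ℝ, s ≤ 0 → f s = 0)
    (hf_pos : ∀ s : ℝ, 0 < s → 0 < f s / s ^ 3)
    (hf_mono : MonotoneOn (fun s => f s / s ^ 3) (Set.Ioi (0 : ℝ)))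
    (F G : ℝ → ℝ)
    (hF : ∀ s : ℝ, F s = ∫ τ in (0:ℝ)..s, f τ)
    (hG : ∀ s : ℝ, G s = s * f s - 4 * F s) :
    MonotoneOn G (Set.Ici 0) ∧ G 0 = 0 ∧ ∀ s : ℝ, 0 < s → 0 ≤ G s := by
  have hint : ∀ a b : ℝ, IntervalIntegrable f MeasureTheory.volume a b :=
    fun a b => hf_cont.intervalIntegrable a b
  have hG0 : G 0 = 0 := by
    rw [hG, hF, hf_zero 0 le_rfl]
    simp
  have hmono : MonotoneOn G (Set.Ici 0) := by
    intro a ha b hb hab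
    rcases eq_or_lt_of_le hab with rfl | hlt
    · exact le_rfl
    simp only [Set.mem_Ici] at ha hb
    have hb0 : 0 < b := lt_of_le_of_lt ha hlt
    set c := f b / b ^ 3 with hc
    have hcb : f b = c * b ^ 3 := by
      rw [hc, div_mul_cancel₀ _ (pow_ne_zero 3 hb0.ne')]
    have hbound : ∀ τ ∈ Set.Icc a b, f τ ≤ c * τ ^ 3 := by
      intro τ hτ
      obtain ⟨h1, h2⟩ := hτ
      rcases lt_or_eq_of_le (le_trans ha h1) with hτ0 | hτ0
      · have hm := hf_mono (Set.mem_Ioi.2 hτ0) (Set.mem_Ioi.2 hb0) h2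
        have : f τ = (f τ / τ ^ 3) * τ ^ 3 := by
          field_simp
        rw [this]
        exact mul_le_mul_of_nonneg_right hm (by positivity)
      · rw [← hτ0, hf_zero 0 le_rfl]
        norm_num
    have hle : ∫ τ in a..b, f τ ≤ ∫ τ in a..b, c * τ ^ 3 :=
      intervalIntegral.integral_mono_on hab (hint a b)
        ((continuous_const.mul (continuous_pow 3)).intervalIntegrable a b) hbound
    have hval : ∫ τ in a..b, c * τ ^ 3 = c * (b ^ 4 - a ^ 4) / 4 := by
      rw [intervalIntegral.integral_const_mul, integral_pow]
      ring
    have hFab : F b - F a = ∫ τ in a..b, f τ := by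
      rw [hF a, hF b, ← intervalIntegral.integral_add_adjacent_intervals (hint 0 a) (hint a b)]
      ring
    have hfa : f a ≤ c * a ^ 3 := hbound a ⟨le_rfl, hab⟩
    have hfa' : a * f a ≤ a * (c * a ^ 3) := mul_le_mul_of_nonneg_left hfa ha
    rw [hG a, hG b]
    nlinarith [hle, hval, hFab, hcb, hfa']
  exact ⟨hmono, hG0, fun s hs => by
    calc (0:ℝ) = G 0 := hG0.symm
    _ ≤ G s := hmono (Set.mem_Ici.2 le_rfl) (Set.mem_Ici.2 hs.le) hs.le⟩
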